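/- arXiv:1105.1906 — 2 statements merged into one kernel-verified Lean document; each statement's English description precedes it below -/
import Mathlib

section
/- Let P_k denote the path on k vertices. For every k ≥ 3, the (2,1)-total labelling choosability of P_k equals 5, i.e., C_{2,1}^T(P_k) = 5 = 2·2 + 1. -/
open SimpleGraph

/-- A (p,1)-total labelling of `G`: adjacent vertices get distinct colors, edges sharing an
endpoint get distinct colors, and a vertex and an incident edge differ by at least `p`. -/
def IsPOneTotalLabelling {V : Type*} (G : SimpleGraph V) (p : ℕ)
    (cv : V → ℤ) (ce : G.edgeSet → ℤ) : Prop :=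
  (∀ u v : V, G.Adj u v → cv u ≠ cv v) ∧
  (∀ e f : G.edgeSet, e ≠ f → (∃ v : V, v ∈ (e : Sym2 V) ∧ v ∈ (f : Sym2 V)) → ce e ≠ ce f) ∧
  (∀ (v : V) (e : G.edgeSet), v ∈ (e : Sym2 V) → (p : ℤ) ≤ |cv v - ce e|)

/-- χ_{p,1}^T(G): least `k` such that `G` has a (p,1)-total labelling with colors in
`{0, …, k-1}`. -/
noncomputable def pOneTotalChromatic {V : Type*} (G : SimpleGraph V) (p : ℕ) : ℕ :=
  sInf {k : ℕ | ∃ cv ce, IsPOneTotalLabelling G p cv ce ∧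
    (∀ v : V, cv v ∈ Set.Ico (0 : ℤ) k) ∧ (∀ e : G.edgeSet, ce e ∈ Set.Ico (0 : ℤ) k)}

/-- λ_p^T(G): least `k` such that `G` has a (p,1)-total labelling with colors in `{0, …, k}`. -/
noncomputable def pOneTotalNumber {V : Type*} (G : SimpleGraph V) (p : ℕ) : ℕ :=
  sInf {k : ℕ | ∃ cv ce, IsPOneTotalLabelling G p cv ce ∧
    (∀ v : V, cv v ∈ Set.Icc (0 : ℤ) k) ∧ (∀ e : G.edgeSet, ce e ∈ Set.Icc (0 : ℤ) k)}

/-- `G` is `L`-(p,1)-total labelable for list assignment `(Lv, Le)`. -/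
def ListPOneTotalLabelable {V : Type*} (G : SimpleGraph V) (p : ℕ)
    (Lv : V → Finset ℤ) (Le : G.edgeSet → Finset ℤ) : Prop :=
  ∃ cv ce, IsPOneTotalLabelling G p cv ce ∧ (∀ v, cv v ∈ Lv v) ∧ (∀ e, ce e ∈ Le e)

/-- C_{p,1}^T(G): least `k` such that `G` is `L`-(p,1)-total labelable for every list
assignment whose lists all have size `k`. -/
noncomputable def pOneTotalChoosability {V : Type*} (G : SimpleGraph V) (p : ℕ) : ℕ :=
  sInf {k : ℕ | ∀ (Lv : V → Finset ℤ) (Le : G.edgeSet → Finset ℤ),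
    (∀ v, (Lv v).card = k) → (∀ e, (Le e).card = k) → ListPOneTotalLabelable G p Lv Le}

/-- An L(p,q)-labelling of `H`. -/
def IsLpqLabelling {V : Type*} (H : SimpleGraph V) (p q : ℕ) (f : V → ℤ) : Prop :=
  (∀ u v : V, H.Adj u v → (p : ℤ) ≤ |f u - f v|) ∧
  (∀ u v : V, H.dist u v = 2 → (q : ℤ) ≤ |f u - f v|)

/-- χ^{p,q}(H): least `k` such that `H` has an L(p,q)-labelling with colors in `{0, …, k-1}`. -/
noncomputable def LpqChromatic {V : Type*} (H : SimpleGraph V) (p q : ℕ) : ℕ :=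
  sInf {k : ℕ | ∃ f, IsLpqLabelling H p q f ∧ ∀ v : V, f v ∈ Set.Ico (0 : ℤ) k}

/-- χ_l^{p,q}(H): least `k` such that from every assignment of lists of size `k`, `H` has an
L(p,q)-labelling choosing each vertex's color from its list. -/
noncomputable def listLpqChromatic {V : Type*} (H : SimpleGraph V) (p q : ℕ) : ℕ :=
  sInf {k : ℕ | ∀ L : V → Finset ℤ, (∀ v, (L v).card = k) →
    ∃ f, IsLpqLabelling H p q f ∧ ∀ v : V, f v ∈ L v}

/-- The star `K_{1,n}`: vertex `0` is the center, adjacent to the `n` leaves. -/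
def starGraph (n : ℕ) : SimpleGraph (Fin (n + 1)) :=
  SimpleGraph.fromRel (fun v w => v = 0 ∨ w = 0)

/-- The incidence graph `S_I(G)`: replace every edge of `G` by a path of length 2. -/
def incidenceGraph {V : Type*} (G : SimpleGraph V) : SimpleGraph (V ⊕ G.edgeSet) where
  Adj x y :=
    (∃ (v : V) (e : G.edgeSet), x = Sum.inl v ∧ y = Sum.inr e ∧ v ∈ (e : Sym2 V)) ∨
    (∃ (v : V) (e : G.edgeSet), x = Sum.inr e ∧ y = Sum.inl v ∧ v ∈ (e : Sym2 V))
  symm := by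
    refine ⟨?_⟩
    rintro x y (⟨v, e, rfl, rfl, h⟩ | ⟨v, e, rfl, rfl, h⟩)
    · exact Or.inr ⟨v, e, rfl, rfl, h⟩
    · exact Or.inl ⟨v, e, rfl, rfl, h⟩
  loopless := by
    refine ⟨?_⟩
    rintro x (⟨v, e, h1, h2, -⟩ | ⟨v, e, h1, h2, -⟩) <;> subst h1 <;> simp at h2

/-- `H` is a minor of `G`: there are pairwise disjoint nonempty connected branch sets in `G`,
one for each vertex of `H`, with an edge of `G` between the branch sets of any two vertices
adjacent in `H`. -/
def IsGraphMinor {W V : Type*} (H : SimpleGraph W) (G : SimpleGraph V) : Prop :=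
  ∃ B : W → Set V,
    (∀ w, (B w).Nonempty) ∧
    (∀ w, (G.induce (B w)).Connected) ∧
    (∀ w₁ w₂, w₁ ≠ w₂ → Disjoint (B w₁) (B w₂)) ∧
    (∀ w₁ w₂, H.Adj w₁ w₂ → ∃ v₁ ∈ B w₁, ∃ v₂ ∈ B w₂, G.Adj v₁ v₂)

/-- A graph is outerplanar iff it has neither `K₄` nor `K_{2,3}` as a minor. -/
def Outerplanar {V : Type*} (G : SimpleGraph V) : Prop :=
  ¬ IsGraphMinor (completeGraph (Fin 4)) G ∧
  ¬ IsGraphMinor (completeBipartiteGraph (Fin 2) (Fin 3)) G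


lemma pick_lemma (s : Finset ℤ) (hs : 5 ≤ s.card) (a b : ℤ) :
    ∃ x ∈ s, x ≠ a ∧ (2:ℤ) ≤ |x - b| := by
  have h4 : ({a, b-1, b, b+1} : Finset ℤ).card ≤ 4 := by
    refine (Finset.card_insert_le _ _).trans ?_
    have : ({b-1, b, b+1} : Finset ℤ).card ≤ 3 := by
      refine (Finset.card_insert_le _ _).trans ?_
      have : ({b, b+1} : Finset ℤ).card ≤ 2 := Finset.card_insert_le _ _
      omega
    omega
  have hne : (s \ {a, b-1, b, b+1}).Nonempty := by
    rw [← Finset.card_pos]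
    have := Finset.le_card_sdiff ({a, b-1, b, b+1} : Finset ℤ) s
    omega
  obtain ⟨x, hx⟩ := hne
  rw [Finset.mem_sdiff] at hx
  simp only [Finset.mem_insert, Finset.mem_singleton, not_or] at hx
  obtain ⟨hxs, hxa, h1, h2, h3⟩ := hx
  exact ⟨x, hxs, hxa, by rw [le_abs]; omega⟩

noncomputable def pickF (s : Finset ℤ) (hs : 5 ≤ s.card) (a b : ℤ) : ℤ :=
  (pick_lemma s hs a b).choose

lemma pickF_spec (s : Finset ℤ) (hs : 5 ≤ s.card) (a b : ℤ) :
    pickF s hs a b ∈ s ∧ pickF s hs a b ≠ a ∧ (2:ℤ) ≤ |pickF s hs a b - b| := by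
  have := (pick_lemma s hs a b).choose_spec
  exact ⟨this.1, this.2.1, this.2.2⟩

lemma path_edge_mem {k i : ℕ} (h : i + 1 < k) :
    s(⟨i, Nat.lt_of_succ_lt h⟩, (⟨i+1, h⟩ : Fin k)) ∈ (pathGraph k).edgeSet := by
  rw [SimpleGraph.mem_edgeSet, pathGraph_adj]
  left; rfl

lemma path_edge_spec {k : ℕ} (e : (pathGraph k).edgeSet) :
    ∃ (i : ℕ) (h : i + 1 < k),
      (e : Sym2 (Fin k)) = s(⟨i, Nat.lt_of_succ_lt h⟩, ⟨i+1, h⟩) := by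
  obtain ⟨e, he⟩ := e
  induction e using Sym2.ind with
  | _ u v =>
    rw [SimpleGraph.mem_edgeSet, pathGraph_adj] at he
    rcases he with h | h
    · refine ⟨u.val, by omega, ?_⟩
      show s(u, v) = _
      congr 1
      simp only [Prod.ext_iff, Fin.ext_iff]
      omega
    · refine ⟨v.val, by omega, ?_⟩
      show s(u, v) = _
      rw [Sym2.eq_swap]
      congr 1
      simp only [Prod.ext_iff, Fin.ext_iff]
      omega

noncomputable def eidx {k : ℕ} (e : (pathGraph k).edgeSet) : ℕ :=
  (path_edge_spec e).choose

lemma eidx_spec {k : ℕ} (e : (pathGraph k).edgeSet) :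
    ∃ h : eidx e + 1 < k,
      (e : Sym2 (Fin k)) = s(⟨eidx e, Nat.lt_of_succ_lt h⟩, ⟨eidx e + 1, h⟩) :=
  (path_edge_spec e).choose_spec

/-- The sequence of (vertex color, edge color) pairs chosen greedily. -/
noncomputable def lab (Lv' Le' : ℕ → Finset ℤ) (hv : ∀ i, 5 ≤ (Lv' i).card)
    (he : ∀ i, 5 ≤ (Le' i).card) : ℕ → ℤ × ℤ
  | 0 =>
    (pickF (Lv' 0) (hv 0) 0 0,
     pickF (Le' 0) (he 0) (pickF (Lv' 0) (hv 0) 0 0) (pickF (Lv' 0) (hv 0) 0 0))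
  | n+1 =>
    (pickF (Lv' (n+1)) (hv (n+1)) (lab Lv' Le' hv he n).1 (lab Lv' Le' hv he n).2,
     pickF (Le' (n+1)) (he (n+1)) (lab Lv' Le' hv he n).2
       (pickF (Lv' (n+1)) (hv (n+1)) (lab Lv' Le' hv he n).1 (lab Lv' Le' hv he n).2))

variable {Lv' Le' : ℕ → Finset ℤ} {hv : ∀ i, 5 ≤ (Lv' i).card} {he : ∀ i, 5 ≤ (Le' i).card}

lemma lab_v_mem (n : ℕ) : (lab Lv' Le' hv he n).1 ∈ Lv' n := by
  cases n with
  | zero => simp only [lab]; exact (pickF_spec _ _ _ _).1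
  | succ m => simp only [lab]; exact (pickF_spec _ _ _ _).1

lemma lab_e_mem (n : ℕ) : (lab Lv' Le' hv he n).2 ∈ Le' n := by
  cases n with
  | zero => simp only [lab]; exact (pickF_spec _ _ _ _).1
  | succ m => simp only [lab]; exact (pickF_spec _ _ _ _).1

lemma lab_ve (n : ℕ) : (2:ℤ) ≤ |(lab Lv' Le' hv he n).1 - (lab Lv' Le' hv he n).2| := by
  cases n with
  | zero => simp only [lab]; rw [abs_sub_comm]; exact (pickF_spec _ _ _ _).2.2
  | succ m => simp only [lab]; rw [abs_sub_comm]; exact (pickF_spec _ _ _ _).2.2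

lemma lab_v_succ (n : ℕ) :
    (lab Lv' Le' hv he (n+1)).1 ≠ (lab Lv' Le' hv he n).1 ∧
      (2:ℤ) ≤ |(lab Lv' Le' hv he (n+1)).1 - (lab Lv' Le' hv he n).2| := by
  conv_lhs => simp only [lab]
  constructor
  · show (lab Lv' Le' hv he (n+1)).1 ≠ _
    simp only [lab]
    exact (pickF_spec _ _ _ _).2.1
  · show (2:ℤ) ≤ |(lab Lv' Le' hv he (n+1)).1 - _|
    simp only [lab]
    exact (pickF_spec _ _ _ _).2.2

lemma lab_e_succ (n : ℕ) :
    (lab Lv' Le' hv he (n+1)).2 ≠ (lab Lv' Le' hv he n).2 := by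
  show (lab Lv' Le' hv he (n+1)).2 ≠ _
  simp only [lab]
  exact (pickF_spec _ _ _ _).2.1

lemma sym2_mk_eq {k : ℕ} {i j : ℕ} (hi : i < k) (hi' : i + 1 < k) (hj : j < k)
    (hj' : j + 1 < k) (h : i = j) :
    (s(⟨i, hi⟩, ⟨i+1, hi'⟩) : Sym2 (Fin k)) = s(⟨j, hj⟩, ⟨j+1, hj'⟩) := by
  subst h; rfl

def extV {k : ℕ} (Lv : Fin k → Finset ℤ) : ℕ → Finset ℤ :=
  fun i => if h : i < k then Lv ⟨i, h⟩ else {0, 1, 2, 3, 4}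

def extE {k : ℕ} (Le : (pathGraph k).edgeSet → Finset ℤ) : ℕ → Finset ℤ :=
  fun i => if h : i + 1 < k then
    Le ⟨s(⟨i, Nat.lt_of_succ_lt h⟩, ⟨i+1, h⟩), path_edge_mem h⟩ else {0, 1, 2, 3, 4}

lemma extV_card {k : ℕ} {Lv : Fin k → Finset ℤ} (hLv : ∀ v, (Lv v).card = 5) (i : ℕ) :
    5 ≤ (extV Lv i).card := by
  unfold extV; split
  · exact (hLv _).ge
  · decide

lemma extE_card {k : ℕ} {Le : (pathGraph k).edgeSet → Finset ℤ}
    (hLe : ∀ e, (Le e).card = 5) (i : ℕ) : 5 ≤ (extE Le i).card := by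
  unfold extE; split
  · exact (hLe _).ge
  · decide

lemma extV_eq {k : ℕ} (Lv : Fin k → Finset ℤ) (v : Fin k) : extV Lv v.val = Lv v := by
  unfold extV; rw [dif_pos v.isLt]

lemma extE_eq {k : ℕ} (Le : (pathGraph k).edgeSet → Finset ℤ) (e : (pathGraph k).edgeSet) :
    extE Le (eidx e) = Le e := by
  obtain ⟨h1, hrep⟩ := eidx_spec e
  unfold extE; rw [dif_pos h1]
  congr 1
  exact Subtype.ext hrep.symm

lemma upper_bound {k : ℕ} (Lv : Fin k → Finset ℤ) (Le : (pathGraph k).edgeSet → Finset ℤ)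
    (hLv : ∀ v, (Lv v).card = 5) (hLe : ∀ e, (Le e).card = 5) :
    ListPOneTotalLabelable (pathGraph k) 2 Lv Le := by
  have hv := extV_card hLv
  have he' := extE_card hLe
  refine ⟨fun v => (lab (extV Lv) (extE Le) hv he' v.val).1,
    fun e => (lab (extV Lv) (extE Le) hv he' (eidx e)).2, ⟨?_, ?_, ?_⟩, ?_, ?_⟩
  · -- adjacent vertices
    intro u w huw
    rw [pathGraph_adj] at huw
    rcases huw with h | h
    · beta_reduce
      rw [← h]; exact ((lab_v_succ u.val).1).symm
    · beta_reduce
      rw [← h]; exact (lab_v_succ w.val).1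
  · -- adjacent edges
    intro e f hef hshare
    obtain ⟨he1, hrep_e⟩ := eidx_spec e
    obtain ⟨hf1, hrep_f⟩ := eidx_spec f
    have hne : eidx e ≠ eidx f := by
      intro h
      exact hef (Subtype.ext (by rw [hrep_e, hrep_f, sym2_mk_eq _ _ _ _ h]))
    obtain ⟨w, hw1, hw2⟩ := hshare
    rw [hrep_e, Sym2.mem_iff] at hw1
    rw [hrep_f, Sym2.mem_iff] at hw2
    have hw1' : w.val = eidx e ∨ w.val = eidx e + 1 := by
      rcases hw1 with h | h <;> [left; right] <;> rw [h]
    have hw2' : w.val = eidx f ∨ w.val = eidx f + 1 := by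
      rcases hw2 with h | h <;> [left; right] <;> rw [h]
    have : eidx f = eidx e + 1 ∨ eidx e = eidx f + 1 := by omega
    beta_reduce
    rcases this with h | h
    · rw [h]; exact (lab_e_succ (eidx e)).symm
    · rw [h]; exact lab_e_succ (eidx f)
  · -- incidence
    intro v e hve
    obtain ⟨h1, hrep⟩ := eidx_spec e
    rw [hrep, Sym2.mem_iff] at hve
    rcases hve with h | h
    · subst h
      exact_mod_cast lab_ve (eidx e)
    · subst h
      exact_mod_cast (lab_v_succ (eidx e)).2
  · intro v
    have h := lab_v_mem (Lv' := extV Lv) (Le' := extE Le) (hv := hv) (he := he') v.val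
    rwa [extV_eq] at h
  · intro e
    have h := lab_e_mem (Lv' := extV Lv) (Le' := extE Le) (hv := hv) (he := he') (eidx e)
    rwa [extE_eq] at h

lemma no_small {k : ℕ} (hk : 3 ≤ k) (cv : Fin k → ℤ) (ce : (pathGraph k).edgeSet → ℤ)
    (hl : IsPOneTotalLabelling (pathGraph k) 2 cv ce)
    (hbv : ∀ v, 0 ≤ cv v ∧ cv v ≤ 3) (hbe : ∀ e, 0 ≤ ce e ∧ ce e ≤ 3) : False := by
  obtain ⟨ha, hedge, hi⟩ := hl
  have h0 : (0 : ℕ) < k := by omega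
  have h1 : (1 : ℕ) < k := by omega
  have h2 : (2 : ℕ) < k := by omega
  set v0 : Fin k := ⟨0, h0⟩ with hv0
  set v1 : Fin k := ⟨1, h1⟩ with hv1
  set v2 : Fin k := ⟨2, h2⟩ with hv2
  have hadj01 : (pathGraph k).Adj v0 v1 := by rw [pathGraph_adj]; left; rfl
  have hadj12 : (pathGraph k).Adj v1 v2 := by rw [pathGraph_adj]; left; rfl
  set E0 : (pathGraph k).edgeSet := ⟨s(v0, v1), hadj01⟩ with hE0
  set E1 : (pathGraph k).edgeSet := ⟨s(v1, v2), hadj12⟩ with hE1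
  have hne01 : cv v0 ≠ cv v1 := ha _ _ hadj01
  have hne12 : cv v1 ≠ cv v2 := ha _ _ hadj12
  have hEne : E0 ≠ E1 := by
    intro h
    have := congrArg Subtype.val h
    rw [hE0, hE1] at this
    simp only [Sym2.eq_iff, hv0, hv1, hv2, Fin.mk.injEq] at this
    omega
  have hEE : ce E0 ≠ ce E1 := hedge E0 E1 hEne ⟨v1, by
      rw [hE0]; exact Sym2.mem_iff.mpr (Or.inr rfl), by
      rw [hE1]; exact Sym2.mem_iff.mpr (Or.inl rfl)⟩
  have hA := hi v0 E0 (by rw [hE0]; exact Sym2.mem_iff.mpr (Or.inl rfl))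
  have hB := hi v1 E0 (by rw [hE0]; exact Sym2.mem_iff.mpr (Or.inr rfl))
  have hC := hi v1 E1 (by rw [hE1]; exact Sym2.mem_iff.mpr (Or.inl rfl))
  have hD := hi v2 E1 (by rw [hE1]; exact Sym2.mem_iff.mpr (Or.inr rfl))
  rw [le_abs] at hA hB hC hD
  have b0 := hbv v0; have b1 := hbv v1; have b2 := hbv v2
  have e0 := hbe E0; have e1 := hbe E1
  push_cast at hA hB hC hD
  rcases hA with h|h <;> rcases hB with h'|h' <;> rcases hC with h''|h'' <;>
    rcases hD with h'''|h''' <;> omega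

/-- C_{2,1}^T(P_k) = 5 = 2·2 + 1 for all k ≥ 3. -/
theorem pOneTotalChoosability_pathGraph_two (k : ℕ) (hk : 3 ≤ k) :
    pOneTotalChoosability (SimpleGraph.pathGraph k) 2 = 5 ∧ (5 : ℕ) = 2 * 2 + 1 := by
  refine ⟨?_, rfl⟩
  have h5 : 5 ∈ {m : ℕ | ∀ (Lv : Fin k → Finset ℤ) (Le : (pathGraph k).edgeSet → Finset ℤ),
      (∀ v, (Lv v).card = m) → (∀ e, (Le e).card = m) →
      ListPOneTotalLabelable (pathGraph k) 2 Lv Le} :=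
    fun Lv Le hLv hLe => upper_bound Lv Le hLv hLe
  refine le_antisymm (Nat.sInf_le h5) (le_csInf ⟨5, h5⟩ ?_)
  intro m hm
  by_contra hlt
  push_neg at hlt
  have hm4 : m ≤ 4 := by omega
  set L : Finset ℤ := (Finset.range m).image (Nat.cast : ℕ → ℤ) with hL
  have hcard : L.card = m := by
    rw [hL, Finset.card_image_of_injective _ Nat.cast_injective, Finset.card_range]
  have hbound : ∀ x ∈ L, (0:ℤ) ≤ x ∧ x ≤ 3 := by
    intro x hx
    rw [hL, Finset.mem_image] at hx
    obtain ⟨n, hn, rfl⟩ := hx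
    rw [Finset.mem_range] at hn
    refine ⟨?_, ?_⟩ <;> omega
  obtain ⟨cv, ce, hlab, hcv, hce⟩ := hm (fun _ => L) (fun _ => L)
    (fun _ => hcard) (fun _ => hcard)
  exact no_small hk cv ce hlab (fun v => hbound _ (hcv v)) (fun e => hbound _ (hce e))
end

section
/- Let T be a finite tree (a connected acyclic simple graph) with maximum degree Δ. Then for every integer d ≥ 1 and every integer s ≥ 1, χ_l^{d,s}(T) ≤ 2d − 1 + sΔ. -/
open SimpleGraph

set_option linter.unusedSectionVars false

namespace ListLpqTreeAux

open Finset in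
lemma exists_sep_coloring {α : Type*} [DecidableEq α] (s : ℕ) :
    ∀ (n : ℕ) (A : Finset α) (K : α → Finset ℤ), A.card = n →
      (∀ i ∈ A, s * (A.card - 1) + 1 ≤ (K i).card) →
      ∃ g : α → ℤ, (∀ i ∈ A, g i ∈ K i) ∧
        ∀ i ∈ A, ∀ j ∈ A, i ≠ j → (s : ℤ) ≤ |g i - g j| := by
  intro n
  induction n with
  | zero =>
    intro A K hA _
    rw [Finset.card_eq_zero] at hA
    subst hA
    exact ⟨fun _ => 0, by simp, by simp⟩
  | succ n ih =>
    intro A K hA hK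
    have hAne : A.Nonempty := Finset.card_pos.mp (by omega)
    obtain ⟨i₀, hi₀, hmax⟩ := Finset.exists_max_image A (fun i => (K i).max) hAne
    have hK0 : (K i₀).Nonempty := by
      have := hK i₀ hi₀; exact Finset.card_pos.mp (by omega)
    set c := (K i₀).max' hK0 with hc
    have hle : ∀ j ∈ A, ∀ x ∈ K j, x ≤ c := by
      intro j hj x hx
      have h1 : (x : WithBot ℤ) ≤ (K j).max := Finset.le_max hx
      have h2 := hmax j hj
      have h3 : (K i₀).max = (c : WithBot ℤ) := (Finset.coe_max' hK0).symm
      rw [h3] at h2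
      exact_mod_cast h1.trans h2
    set A' := A.erase i₀ with hA'def
    set K' : α → Finset ℤ := fun j => K j \ Finset.Icc (c - s + 1) c with hK'def
    have hA' : A'.card = n := by
      rw [hA'def, Finset.card_erase_of_mem hi₀, hA]; omega
    have hIcc : (Finset.Icc (c - s + 1) c).card = s := by
      rw [Int.card_Icc]
      omega
    have hK'card : ∀ j ∈ A', s * (A'.card - 1) + 1 ≤ (K' j).card := by
      intro j hj
      have hj' : j ∈ A := Finset.mem_of_mem_erase hj
      have h1 := hK j hj'
      have h2 : (K j).card - (Finset.Icc (c - s + 1) c).card ≤ (K' j).card :=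
        Finset.le_card_sdiff _ _
      rw [hIcc] at h2
      rw [hA] at h1
      rw [hA']
      cases n with
      | zero =>
        rw [Finset.card_eq_zero] at hA'
        simp [hA'] at hj
      | succ m =>
        have h3 : s * (m + 1 - 1) + s ≤ s * (m + 1) := by simp [Nat.mul_succ]
        have h4 : s * (m + 1) + 1 ≤ (K j).card := by simpa using h1
        omega
    obtain ⟨g, hg1, hg2⟩ := ih A' K' hA' hK'card
    have hsep : ∀ j ∈ A', (s : ℤ) ≤ |c - g j| := by
      intro j hj
      have hgj := hg1 j hj
      rw [hK'def, Finset.mem_sdiff, Finset.mem_Icc] at hgj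
      have hle' : g j ≤ c := hle j (Finset.mem_of_mem_erase hj) _ hgj.1
      have h2 := hgj.2
      have h3 : g j ≤ c - s := by omega
      rw [abs_of_nonneg (by omega : (0:ℤ) ≤ c - g j)]
      omega
    refine ⟨Function.update g i₀ c, ?_, ?_⟩
    · intro i hi
      by_cases h : i = i₀
      · subst h; rw [Function.update_self]; exact Finset.max'_mem _ _
      · rw [Function.update_of_ne h]
        have hi' : i ∈ A' := Finset.mem_erase.mpr ⟨h, hi⟩
        exact (Finset.mem_sdiff.mp (hg1 i hi')).1
    · intro i hi j hj hij
      by_cases h1 : i = i₀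
      · subst h1
        have hj' : j ∈ A' := Finset.mem_erase.mpr ⟨fun h => hij h.symm, hj⟩
        rw [Function.update_self, Function.update_of_ne (fun h => hij h.symm)]
        exact hsep j hj'
      · by_cases h2 : j = i₀
        · subst h2
          have hi' : i ∈ A' := Finset.mem_erase.mpr ⟨h1, hi⟩
          rw [Function.update_self, Function.update_of_ne h1, abs_sub_comm]
          exact hsep i hi'
        · rw [Function.update_of_ne h1, Function.update_of_ne h2]
          exact hg2 i (Finset.mem_erase.mpr ⟨h1, hi⟩) j (Finset.mem_erase.mpr ⟨h2, hj⟩) hij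

variable {V : Type*} [DecidableEq V] {T : SimpleGraph V}


/-- In a tree, every path has length equal to the distance between its endpoints. -/
lemma tree_path_length (hT : T.IsTree) {a b : V} (p : T.Walk a b) (hp : p.IsPath) :
    p.length = T.dist a b := by
  obtain ⟨q, hq, hql⟩ := (hT.isConnected a b).exists_path_of_dist
  have := (hT.existsUnique_path a b).unique hp hq
  rw [this, hql]

/-- Every non-root vertex has a neighbor one step closer to the root. -/
lemma exists_parent (hT : T.IsTree) (r : V) {v : V} (hv : v ≠ r) :
    ∃ u, T.Adj u v ∧ T.dist r u + 1 = T.dist r v := by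
  have hpos : 0 < T.dist v r := (hT.isConnected v r).pos_dist_of_ne hv
  obtain ⟨q, hql⟩ := (hT.isConnected v r).exists_walk_length_eq_dist
  cases q with
  | nil => exact absurd rfl hv
  | @cons _ u _ h q' =>
    refine ⟨u, h.symm, ?_⟩
    have h1 : T.dist r u ≤ q'.length := by
      rw [SimpleGraph.dist_comm]; exact SimpleGraph.dist_le q'
    have h2 : T.dist r v ≤ T.dist r u + T.dist u v :=
      (hT.isConnected).dist_triangle
    have h3 : T.dist u v = 1 := SimpleGraph.dist_eq_one_iff_adj.mpr h.symm
    have h4 : q'.length + 1 = T.dist v r := by simpa using hql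
    rw [SimpleGraph.dist_comm] at h4
    omega

/-- Uniqueness of the parent: any neighbor one step closer to the root is *the* parent. -/
lemma parent_unique (hT : T.IsTree) (r : V) {v u u' : V}
    (hu : T.Adj u v) (hdu : T.dist r u + 1 = T.dist r v)
    (hu' : T.Adj u' v) (hdu' : T.dist r u' + 1 = T.dist r v) : u = u' := by
  have key : ∀ x : V, T.Adj x v → T.dist r x + 1 = T.dist r v →
      ∃ q : T.Walk v r, q.IsPath ∧ q.getVert 1 = x := by
    intro x hx hdx
    obtain ⟨p, hp, hpl⟩ := (hT.isConnected x r).exists_path_of_dist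
    have hvp : v ∉ p.support := by
      intro hmem
      have h1 : T.dist v r ≤ (p.dropUntil v hmem).length := SimpleGraph.dist_le _
      have h2 : (p.dropUntil v hmem).length ≤ p.length := Walk.length_dropUntil_le p hmem
      rw [hpl] at h2
      have e1 : T.dist v r = T.dist r v := SimpleGraph.dist_comm
      have e2 : T.dist x r = T.dist r x := SimpleGraph.dist_comm
      omega
    refine ⟨Walk.cons hx.symm p, (Walk.cons_isPath_iff _ _).mpr ⟨hp, hvp⟩, ?_⟩
    rw [Walk.getVert_cons_succ, Walk.getVert_zero]
  obtain ⟨q, hq, hq1⟩ := key u hu hdu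
  obtain ⟨q', hq', hq1'⟩ := key u' hu' hdu'
  have := (hT.existsUnique_path v r).unique hq hq'
  rw [← hq1, ← hq1', this]

/-- Adjacent vertices differ in depth by exactly one. -/
lemma adj_depth (hT : T.IsTree) (r : V) {u v : V} (h : T.Adj u v) :
    T.dist r v = T.dist r u + 1 ∨ T.dist r u = T.dist r v + 1 := by
  have h3 : T.dist u v = 1 := SimpleGraph.dist_eq_one_iff_adj.mpr h
  have t1 : T.dist r v ≤ T.dist r u + T.dist u v := (hT.isConnected).dist_triangle
  have t2 : T.dist r u ≤ T.dist r v + T.dist v u := (hT.isConnected).dist_triangle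
  rw [SimpleGraph.dist_comm (u := v) (v := u)] at t2
  have hne : T.dist r u ≠ T.dist r v := by
    intro heq
    obtain ⟨p, hp, hpl⟩ := (hT.isConnected u r).exists_path_of_dist
    by_cases hvp : v ∈ p.support
    · have hsplit : (p.takeUntil v hvp).length + (p.dropUntil v hvp).length = p.length := by
        rw [← Walk.length_append, Walk.take_spec]
      have h1 : T.dist u v ≤ (p.takeUntil v hvp).length := SimpleGraph.dist_le _
      have h2 : T.dist v r ≤ (p.dropUntil v hvp).length := SimpleGraph.dist_le _
      rw [hpl] at hsplit
      have e1 : T.dist v r = T.dist r v := SimpleGraph.dist_comm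
      have e2 : T.dist u r = T.dist r u := SimpleGraph.dist_comm
      omega
    · have hq : (Walk.cons h.symm p).IsPath := (Walk.cons_isPath_iff _ _).mpr ⟨hp, hvp⟩
      have hthis := tree_path_length hT _ hq
      rw [Walk.length_cons, hpl] at hthis
      have e1 : T.dist v r = T.dist r v := SimpleGraph.dist_comm
      have e2 : T.dist u r = T.dist r u := SimpleGraph.dist_comm
      omega
  omega

/-- A distance-2 pair has a common neighbor. -/
lemma dist_two_mid (hT : T.IsTree) {u v : V} (h : T.dist u v = 2) :
    ∃ w, T.Adj u w ∧ T.Adj w v := by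
  obtain ⟨p, hp, hpl⟩ := (hT.isConnected u v).exists_path_of_dist
  rw [h] at hpl
  refine ⟨p.getVert 1, ?_, ?_⟩
  · have := p.adj_getVert_succ (by omega : 0 < p.length)
    rwa [Walk.getVert_zero] at this
  · have := p.adj_getVert_succ (by omega : 1 < p.length)
    have h2 := p.getVert_length
    rw [hpl] at h2
    simpa [h2] using p.adj_getVert_succ (show 1 < p.length by omega)

end ListLpqTreeAux


namespace ListLpqTreeAux

section Defs

variable {V : Type*}

open Classical in
noncomputable def parentFn (T : SimpleGraph V) (r v : V) : V :=
  if h : ∃ u, T.Adj u v ∧ T.dist r u + 1 = T.dist r v then h.choose else r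

open Classical in
noncomputable def childrenFn [Fintype V] (T : SimpleGraph V) (r u : V) : Finset V :=
  Finset.univ.filter fun v => v ≠ r ∧ parentFn T r v = u

open Classical in
noncomputable def redList (T : SimpleGraph V) (r : V) (L : V → Finset ℤ) (d s : ℕ)
    (c : V → ℤ) (v : V) : Finset ℤ :=
  (L v \ Finset.Icc (c (parentFn T r v) - d + 1) (c (parentFn T r v) + d - 1)) \
    (if parentFn T r v = r then ∅ else
      Finset.Icc (c (parentFn T r (parentFn T r v)) - s + 1)
        (c (parentFn T r (parentFn T r v)) + s - 1))

def GoodFam [Fintype V] (T : SimpleGraph V) (r : V) (L : V → Finset ℤ) (d s : ℕ)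
    (c : V → ℤ) (u : V) (g : V → ℤ) : Prop :=
  (∀ w ∈ childrenFn T r u, g w ∈ redList T r L d s c w) ∧
    ∀ w₁ ∈ childrenFn T r u, ∀ w₂ ∈ childrenFn T r u, w₁ ≠ w₂ → (s : ℤ) ≤ |g w₁ - g w₂|

open Classical in
noncomputable def chooseFn [Fintype V] (T : SimpleGraph V) (r : V) (L : V → Finset ℤ)
    (d s : ℕ) (c : V → ℤ) (u : V) : V → ℤ :=
  if h : ∃ g : V → ℤ, GoodFam T r L d s c u g then h.choose else fun _ => 0

lemma chooseFn_spec [Fintype V] {T : SimpleGraph V} {r : V} {L : V → Finset ℤ}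
    {d s : ℕ} {c : V → ℤ} {u : V} (h : ∃ g : V → ℤ, GoodFam T r L d s c u g) :
    GoodFam T r L d s c u (chooseFn T r L d s c u) := by
  rw [chooseFn, dif_pos h]
  exact h.choose_spec

noncomputable def colFn [Fintype V] (T : SimpleGraph V) (r : V) (L : V → Finset ℤ)
    (d s : ℕ) : ℕ → V → ℤ
  | 0 => fun _ => if hL : (L r).Nonempty then (L r).min' hL else 0
  | n+1 => fun v =>
      if T.dist r v = n + 1 then chooseFn T r L d s (colFn T r L d s n) (parentFn T r v) v
      else colFn T r L d s n v

end Defs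

end ListLpqTreeAux


open ListLpqTreeAux in
/-- for a tree T with maximum degree Δ and d, s ≥ 1,
χ_l^{d,s}(T) ≤ 2d − 1 + sΔ. -/
theorem listLpqChromatic_tree_le {V : Type*} [Fintype V] (T : SimpleGraph V)
    [DecidableRel T.Adj] (hT : T.IsTree) (d s : ℕ) (hd : 1 ≤ d) (hs : 1 ≤ s) :
    listLpqChromatic T d s ≤ 2 * d - 1 + s * T.maxDegree := by
  classical
  obtain ⟨r⟩ := hT.isConnected.nonempty
  apply Nat.sInf_le
  simp only [Set.mem_setOf_eq]
  intro L hL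
  -- basic parent facts
  have hpar : ∀ v : V, v ≠ r → T.Adj (parentFn T r v) v ∧
      T.dist r (parentFn T r v) + 1 = T.dist r v := by
    intro v hv
    have hex := exists_parent hT r hv
    rw [parentFn, dif_pos hex]
    exact hex.choose_spec
  have hparen : ∀ {u v : V}, T.Adj u v → T.dist r u + 1 = T.dist r v → parentFn T r v = u := by
    intro u v h hdv
    have hv : v ≠ r := by
      intro h'
      subst h'
      rw [SimpleGraph.dist_self] at hdv
      omega
    exact parent_unique hT r (hpar v hv).1 (hpar v hv).2 h hdv
  have hchild_mem : ∀ u v : V, v ∈ childrenFn T r u ↔ v ≠ r ∧ parentFn T r v = u := by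
    intro u v
    simp [childrenFn]
  -- the existence of good families for every partial colouring
  have hcard : ∀ (c : V → ℤ) (u : V), ∃ g : V → ℤ, GoodFam T r L d s c u g := by
    intro c u
    have hsub : childrenFn T r u ⊆ T.neighborFinset u := by
      intro v hv
      rw [hchild_mem] at hv
      rw [SimpleGraph.mem_neighborFinset, ← hv.2]
      exact (hpar v hv.1).1
    have hdegΔ : (T.neighborFinset u).card ≤ T.maxDegree := by
      rw [T.card_neighborFinset_eq_degree u]
      exact T.degree_le_maxDegree u
    refine exists_sep_coloring s (childrenFn T r u).card _ _ rfl ?_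
    intro v hv
    have hv' := (hchild_mem u v).mp hv
    obtain ⟨hvr, hvp⟩ := hv'
    have hcv : (L v).card = 2*d-1+s*T.maxDegree := hL v
    have hI1 : (Finset.Icc (c (parentFn T r v) - d + 1) (c (parentFn T r v) + d - 1)).card
        = 2*d-1 := by
      rw [Int.card_Icc]
      omega
    have hmono1 : (L v).card - (2*d-1) ≤
        (L v \ Finset.Icc (c (parentFn T r v) - d + 1) (c (parentFn T r v) + d - 1)).card := by
      rw [← hI1]
      exact Finset.le_card_sdiff _ _
    have hm1 : 1 ≤ (childrenFn T r u).card := Finset.card_pos.mpr ⟨v, hv⟩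
    by_cases hur : u = r
    · have hmΔ : (childrenFn T r u).card ≤ T.maxDegree :=
        le_trans (Finset.card_le_card hsub) hdegΔ
      have hΔ1 : 1 ≤ T.maxDegree := le_trans hm1 hmΔ
      have hx : s * ((childrenFn T r u).card - 1) ≤ s * (T.maxDegree - 1) :=
        Nat.mul_le_mul_left s (by omega)
      have hy : s * (T.maxDegree - 1) + s = s * T.maxDegree := by
        rw [← Nat.mul_succ]
        congr 1
        omega
      rw [redList, hvp, if_pos hur, Finset.sdiff_empty]
      rw [hvp] at hmono1
      omega
    · have hpu : parentFn T r u ∈ T.neighborFinset u := by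
        rw [SimpleGraph.mem_neighborFinset]
        exact (hpar u hur).1.symm
      have hpnot : parentFn T r u ∉ childrenFn T r u := by
        intro hmem
        rw [hchild_mem] at hmem
        have h1 := (hpar u hur).2
        have h2 := (hpar (parentFn T r u) hmem.1).2
        rw [hmem.2] at h2
        omega
      have hins : insert (parentFn T r u) (childrenFn T r u) ⊆ T.neighborFinset u := by
        intro x hx
        rcases Finset.mem_insert.mp hx with rfl | hx
        · exact hpu
        · exact hsub hx
      have hcardm : (childrenFn T r u).card + 1 ≤ T.maxDegree := by
        have h3 := Finset.card_le_card hins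
        rw [Finset.card_insert_of_notMem hpnot] at h3
        omega
      rw [redList, hvp, if_neg hur]
      rw [hvp] at hmono1
      have hI2 : (Finset.Icc (c (parentFn T r u) - s + 1) (c (parentFn T r u) + s - 1)).card
          = 2*s-1 := by
        rw [Int.card_Icc]
        omega
      have hmono2 :
          (L v \ Finset.Icc (c (parentFn T r v) - d + 1) (c (parentFn T r v) + d - 1)).card
            - (2*s-1) ≤
          ((L v \ Finset.Icc (c (parentFn T r v) - d + 1) (c (parentFn T r v) + d - 1)) \
            Finset.Icc (c (parentFn T r u) - s + 1) (c (parentFn T r u) + s - 1)).card := by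
        rw [← hI2]
        exact Finset.le_card_sdiff _ _
      rw [hvp] at hmono2
      have hx : s * ((childrenFn T r u).card - 1) ≤ s * (T.maxDegree - 2) :=
        Nat.mul_le_mul_left s (by omega)
      have hy : s * (T.maxDegree - 2) + s * 2 = s * T.maxDegree := by
        rw [← Nat.mul_add]
        congr 1
        omega
      omega
  have hgood : ∀ (c : V → ℤ) (u : V), GoodFam T r L d s c u (chooseFn T r L d s c u) :=
    fun c u => chooseFn_spec (hcard c u)
  -- the colouring
  set f : V → ℤ := fun v => colFn T r L d s (T.dist r v) v with hf
  have hstab : ∀ (n : ℕ) (v : V), T.dist r v ≤ n → colFn T r L d s n v = f v := by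
    intro n
    induction n with
    | zero =>
      intro v h
      show colFn T r L d s 0 v = colFn T r L d s (T.dist r v) v
      rw [Nat.le_zero.mp h]
    | succ n ih =>
      intro v h
      by_cases hdv : T.dist r v = n + 1
      · show colFn T r L d s (n+1) v = colFn T r L d s (T.dist r v) v
        rw [hdv]
      · have hle : T.dist r v ≤ n := by omega
        have hcol : colFn T r L d s (n+1) v = colFn T r L d s n v := by
          simp only [colFn]
          rw [if_neg hdv]
        rw [hcol]
        exact ih v hle
  have hion : ∀ v : V, v ≠ r →
      f v = chooseFn T r L d s (colFn T r L d s (T.dist r v - 1)) (parentFn T r v) v ∧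
        1 ≤ T.dist r v := by
    intro v hv
    have hd1 : 0 < T.dist r v := hT.isConnected.pos_dist_of_ne (Ne.symm hv)
    obtain ⟨n, hn⟩ : ∃ n, T.dist r v = n + 1 := ⟨T.dist r v - 1, by omega⟩
    refine ⟨?_, hd1⟩
    show colFn T r L d s (T.dist r v) v = _
    rw [hn]
    simp only [colFn]
    rw [if_pos hn]
    norm_num
  have hfmem : ∀ v : V, v ≠ r →
      f v ∈ redList T r L d s (colFn T r L d s (T.dist r v - 1)) v := by
    intro v hv
    obtain ⟨heq, hd1⟩ := hion v hv
    rw [heq]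
    have hvchild : v ∈ childrenFn T r (parentFn T r v) := (hchild_mem _ v).mpr ⟨hv, rfl⟩
    exact (hgood _ (parentFn T r v)).1 v hvchild
  -- membership in lists
  have hLr : (L r).Nonempty := by
    rw [← Finset.card_pos, hL r]
    have : 1 ≤ 2 * d - 1 := by omega
    omega
  have hLmem : ∀ v : V, f v ∈ L v := by
    intro v
    by_cases hv : v = r
    · have hroot : colFn T r L d s (T.dist r r) r ∈ L r := by
        rw [SimpleGraph.dist_self]
        simp only [colFn]
        rw [dif_pos hLr]
        exact Finset.min'_mem _ _
      rw [hv]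
      exact hroot
    · have := hfmem v hv
      rw [redList] at this
      exact (Finset.mem_sdiff.mp (Finset.mem_sdiff.mp this).1).1
  -- adjacency separation
  have hAdjCase : ∀ u v : V, T.Adj u v → T.dist r v = T.dist r u + 1 →
      (d : ℤ) ≤ |f v - f u| := by
    intro u v h hdv
    have hv : v ≠ r := by
      intro h'
      subst h'
      rw [SimpleGraph.dist_self] at hdv
      omega
    have hpv : parentFn T r v = u := hparen h (by omega)
    have hm := hfmem v hv
    rw [redList] at hm
    have hni := (Finset.mem_sdiff.mp (Finset.mem_sdiff.mp hm).1).2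
    have hcu : colFn T r L d s (T.dist r v - 1) u = f u := hstab _ u (by omega)
    rw [hpv, hcu, Finset.mem_Icc] at hni
    rcases abs_cases (f v - f u) with ⟨he, _⟩ | ⟨he, _⟩ <;> omega
  -- grandparent separation
  have hGrand : ∀ v : V, v ≠ r → parentFn T r v ≠ r →
      (s : ℤ) ≤ |f v - f (parentFn T r (parentFn T r v))| := by
    intro v hv hpv
    have hm := hfmem v hv
    rw [redList] at hm
    have hni := (Finset.mem_sdiff.mp hm).2
    rw [if_neg hpv] at hni
    have hdp := (hpar v hv).2
    have hdpp := (hpar (parentFn T r v) hpv).2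
    have hcu : colFn T r L d s (T.dist r v - 1) (parentFn T r (parentFn T r v))
        = f (parentFn T r (parentFn T r v)) := hstab _ _ (by omega)
    rw [hcu, Finset.mem_Icc] at hni
    rcases abs_cases (f v - f (parentFn T r (parentFn T r v))) with ⟨he, _⟩ | ⟨he, _⟩ <;> omega
  -- sibling separation
  have hSib : ∀ u v w : V, v ∈ childrenFn T r u → w ∈ childrenFn T r u → v ≠ w →
      (s : ℤ) ≤ |f v - f w| := by
    intro u v w hvc hwc hvw
    have hv' := (hchild_mem u v).mp hvc
    have hw' := (hchild_mem u w).mp hwc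
    have hdv := (hpar v hv'.1).2
    have hdw := (hpar w hw'.1).2
    rw [hv'.2] at hdv
    rw [hw'.2] at hdw
    have hdvw : T.dist r v = T.dist r w := by omega
    obtain ⟨hev, -⟩ := hion v hv'.1
    obtain ⟨hew, -⟩ := hion w hw'.1
    rw [hev, hew, hv'.2, hw'.2, hdvw]
    exact (hgood (colFn T r L d s (T.dist r w - 1)) u).2 v hvc w hwc hvw
  refine ⟨f, ⟨?_, ?_⟩, hLmem⟩
  · intro u v h
    rcases adj_depth hT r h with hdv | hdv
    · rw [abs_sub_comm]
      exact hAdjCase u v h hdv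
    · exact hAdjCase v u h.symm hdv
  · intro u v h2
    obtain ⟨w, huw, hwv⟩ := dist_two_mid hT h2
    have huv : u ≠ v := by
      intro he
      subst he
      rw [SimpleGraph.dist_self] at h2
      omega
    rcases adj_depth hT r huw with h1 | h1 <;> rcases adj_depth hT r hwv with h3 | h3
    · -- u is grandparent of v
      have hwu : parentFn T r w = u := hparen huw (by omega)
      have hvw : parentFn T r v = w := hparen hwv (by omega)
      have hvr : v ≠ r := by
        intro he; subst he
        rw [SimpleGraph.dist_self] at h3
        omega
      have hwr : w ≠ r := by
        intro he; subst he
        rw [SimpleGraph.dist_self] at h1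
        omega
      have := hGrand v hvr (by rw [hvw]; exact hwr)
      rw [hvw, hwu] at this
      rw [abs_sub_comm]
      exact this
    · -- u and v are both parents of w : contradiction
      have hwu : parentFn T r w = u := hparen huw (by omega)
      have hwv' : parentFn T r w = v := hparen hwv.symm (by omega)
      exact absurd (hwu.symm.trans hwv') huv
    · -- siblings
      have hpu : parentFn T r u = w := hparen huw.symm (by omega)
      have hpv : parentFn T r v = w := hparen hwv (by omega)
      have hur : u ≠ r := by
        intro he; subst he
        rw [SimpleGraph.dist_self] at h1
        omega
      have hvr : v ≠ r := by
        intro he; subst he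
        rw [SimpleGraph.dist_self] at h3
        omega
      exact hSib w u v ((hchild_mem w u).mpr ⟨hur, hpu⟩) ((hchild_mem w v).mpr ⟨hvr, hpv⟩) huv
    · -- v is grandparent of u
      have hpu : parentFn T r u = w := hparen huw.symm (by omega)
      have hpw : parentFn T r w = v := hparen hwv.symm (by omega)
      have hur : u ≠ r := by
        intro he; subst he
        rw [SimpleGraph.dist_self] at h1
        omega
      have hwr : w ≠ r := by
        intro he; subst he
        rw [SimpleGraph.dist_self] at h3
        omega
      have := hGrand u hur (by rw [hpu]; exact hwr)
      rw [hpu, hpw] at this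
      exact this
end
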